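/- The projected distributional Bellman operator Π^λ T^π maps F_{Q,m}^X into itself and is a γ-contraction with respect to w̄_∞ on F_{Q,m}^X; consequently it has a unique fixed point η̂^π_λ in F_{Q,m}^X, and for any initial η_0 ∈ F_{Q,m}^X, the sequence defined by η_{k+1} = Π^λ T^π η_k satisfies w̄_∞(η_k, η̂^π_λ) ≤ γ^k · w̄_∞(η_0, η̂^π_λ), which tends to 0 as k → ∞. -/

import Mathlib

open MeasureTheory ProbabilityTheory Set
open scoped ENNReal

/-- Generalized inverse CDF (least τ-quantile). -/
noncomputable def invCDF (ν : Measure ℝ) (τ : ℝ) : ℝ := sInf {y | τ ≤ cdf ν y}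

/-- Upper inverse CDF (greatest τ-quantile). -/
noncomputable def upInvCDF (ν : Measure ℝ) (τ : ℝ) : ℝ := sInf {y | τ < cdf ν y}

/-- Quantile level τ_i = (2i-1)/(2m), with `i : Fin m` zero-indexed. -/
noncomputable def qlevel (m : ℕ) (i : Fin m) : ℝ := (2 * (i : ℝ) + 1) / (2 * m)

/-- The uniform m-atom distribution with the given particle locations. -/
noncomputable def paramDistOne {m : ℕ} (θ : Fin m → ℝ) : Measure ℝ :=
  (m : ℝ≥0∞)⁻¹ • ∑ i : Fin m, Measure.dirac (θ i)

/-- Return-distribution function associated with quantile parameters θ. -/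
noncomputable def paramDist {X : Type*} {m : ℕ} (θ : X → Fin m → ℝ) : X → Measure ℝ :=
  fun x => paramDistOne (θ x)

/-- The distributional Bellman operator T^π. -/
noncomputable def bellman {X : Type*} [MeasurableSpace X]
    (P : X → Measure (ℝ × X)) (γ : ℝ) (η : X → Measure ℝ) : X → Measure ℝ :=
  fun x => (P x).bind (fun p => (η p.2).map (fun z => p.1 + γ * z))

/-- The quantile projection Π^λ, parameter-level output. -/
noncomputable def projParam {X : Type*} {m : ℕ} (lam : X → Fin m → ℝ)
    (η : X → Measure ℝ) : X → Fin m → ℝ :=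
  fun x i => (1 - lam x i) * invCDF (η x) (qlevel m i) + lam x i * upInvCDF (η x) (qlevel m i)

/-- The quantile projection Π^λ on return-distribution functions. -/
noncomputable def proj {X : Type*} {m : ℕ} (lam : X → Fin m → ℝ)
    (η : X → Measure ℝ) : X → Measure ℝ :=
  paramDist (projParam lam η)

/-- The projected distributional Bellman operator Π^λ T^π acting on parameters. -/
noncomputable def projBellmanParam {X : Type*} [MeasurableSpace X]
    (P : X → Measure (ℝ × X)) (γ : ℝ) {m : ℕ} (lam : X → Fin m → ℝ)
    (θ : X → Fin m → ℝ) : X → Fin m → ℝ :=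
  projParam lam (bellman P γ (paramDist θ))

/-- The cube [0,1]^{X×[m]} of interpolation parameters. -/
def unitCube (X : Type*) (m : ℕ) : Set (X → Fin m → ℝ) :=
  {lam | ∀ x i, lam x i ∈ Set.Icc (0:ℝ) 1}

/-- Wasserstein-∞ distance (valued in [0,∞]). -/
noncomputable def winf (ν ν' : Measure ℝ) : ℝ≥0∞ :=
  ⨆ t : Set.Ioo (0:ℝ) 1, ENNReal.ofReal |invCDF ν t - invCDF ν' t|

/-- Extension of w∞ to return-distribution functions: max over states. -/
noncomputable def wbar {X : Type*} (η η' : X → Measure ℝ) : ℝ≥0∞ :=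
  ⨆ x : X, winf (η x) (η' x)

/-- Wasserstein-1 distance between probability distributions on ℝ. -/
noncomputable def w1 (ν ν' : Measure ℝ) : ℝ :=
  ∫ t in Set.Ioo (0:ℝ) 1, |invCDF ν t - invCDF ν' t|

/-- Uniform m-atom distributions. -/
noncomputable def FQ (m : ℕ) : Set (Measure ℝ) :=
  {ν | ∃ z : Fin m → ℝ, ν = paramDistOne z}

section Aux

open Filter Topology

/-! ### Basic facts about `paramDistOne` -/

lemma paramDistOne_apply {m : ℕ} (θ : Fin m → ℝ) {s : Set ℝ} (hs : MeasurableSet s) :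
    paramDistOne θ s = (m : ℝ≥0∞)⁻¹ * ∑ i : Fin m, s.indicator 1 (θ i) := by
  simp [paramDistOne, Measure.smul_apply, Measure.finset_sum_apply,
    Measure.dirac_apply' _ hs, smul_eq_mul]

lemma isProb_paramDistOne {m : ℕ} (hm : 0 < m) (θ : Fin m → ℝ) :
    IsProbabilityMeasure (paramDistOne θ) := by
  constructor
  rw [paramDistOne_apply θ MeasurableSet.univ]
  simp only [Set.indicator_univ, Pi.one_apply, Finset.sum_const, Finset.card_univ,
    Fintype.card_fin, nsmul_eq_mul, mul_one]
  exact ENNReal.inv_mul_cancel (by exact_mod_cast hm.ne') (by simp)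

lemma paramDistOne_map_apply {m : ℕ} (θ : Fin m → ℝ) {f : ℝ → ℝ} (hf : Measurable f)
    {s : Set ℝ} (hs : MeasurableSet s) :
    (paramDistOne θ).map f s = (m : ℝ≥0∞)⁻¹ * ∑ i : Fin m, s.indicator 1 (f (θ i)) := by
  rw [Measure.map_apply hf hs, paramDistOne_apply θ (hf hs)]
  refine congrArg (fun z => (m : ℝ≥0∞)⁻¹ * z) ?_
  exact Finset.sum_congr rfl fun i _ => rfl

/-! ### The shift relation on distributions -/

/-- `ShiftLE ε ν ν'` means the CDF of `ν'` is dominated by that of `ν` shifted by `ε`. -/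
def ShiftLE (ε : ℝ) (ν ν' : Measure ℝ) : Prop := ∀ y : ℝ, ν' (Iic y) ≤ ν (Iic (y + ε))

lemma ShiftLE.cdf_le {ε : ℝ} {ν ν' : Measure ℝ} [IsProbabilityMeasure ν]
    [IsProbabilityMeasure ν'] (h : ShiftLE ε ν ν') (y : ℝ) : cdf ν' y ≤ cdf ν (y + ε) := by
  rw [cdf_eq_real, cdf_eq_real, measureReal_def, measureReal_def]
  exact ENNReal.toReal_mono (measure_ne_top _ _) (h y)

lemma shiftLE_of_cdf {ε : ℝ} {ν ν' : Measure ℝ} [IsProbabilityMeasure ν]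
    [IsProbabilityMeasure ν'] (h : ∀ y, cdf ν' y ≤ cdf ν (y + ε)) : ShiftLE ε ν ν' := fun y => by
  rw [← ofReal_cdf, ← ofReal_cdf]
  exact ENNReal.ofReal_le_ofReal (h y)

/-! ### Quantile sets -/

lemma qSet_nonempty (ν : Measure ℝ) {t : ℝ} (ht : t < 1) : {y | t ≤ cdf ν y}.Nonempty :=
  ((tendsto_cdf_atTop ν).eventually (eventually_ge_nhds ht)).exists

lemma qSet_nonempty' (ν : Measure ℝ) {t : ℝ} (ht : t < 1) : {y | t < cdf ν y}.Nonempty :=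
  ((tendsto_cdf_atTop ν).eventually (eventually_gt_nhds ht)).exists

lemma qSet_bddBelow (ν : Measure ℝ) {t : ℝ} (ht : 0 < t) : BddBelow {y | t ≤ cdf ν y} := by
  obtain ⟨y₀, hy₀⟩ := eventually_atBot.mp ((tendsto_cdf_atBot ν).eventually (eventually_lt_nhds ht))
  refine ⟨y₀, fun y hy => ?_⟩
  by_contra hlt
  exact absurd hy (not_le.mpr (hy₀ y (le_of_lt (not_le.mp hlt))))

lemma qSet_bddBelow' (ν : Measure ℝ) {t : ℝ} (ht : 0 < t) : BddBelow {y | t < cdf ν y} := by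
  have hsub : {y | t < cdf ν y} ⊆ {y | t ≤ cdf ν y} :=
    Set.setOf_subset_setOf.mpr fun y hy => le_of_lt hy
  exact (qSet_bddBelow ν ht).mono hsub

lemma le_cdf_invCDF (ν : Measure ℝ) {t : ℝ} (ht0 : 0 < t) (ht1 : t < 1) :
    t ≤ cdf ν (invCDF ν t) := by
  have hne := qSet_nonempty ν ht1
  have hbd := qSet_bddBelow ν ht0
  have hrc : ContinuousWithinAt (cdf ν) (Ioi (invCDF ν t)) (invCDF ν t) :=
    ((cdf ν).right_continuous _).mono Ioi_subset_Ici_self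
  refine ge_of_tendsto hrc ?_
  refine eventually_nhdsWithin_of_forall fun z hz => ?_
  obtain ⟨y, hyS, hyz⟩ := (csInf_lt_iff hbd hne).mp hz
  exact hyS.trans (monotone_cdf ν hyz.le)

lemma invCDF_le_of_le_cdf {ν : Measure ℝ} {t y : ℝ} (ht0 : 0 < t) (h : t ≤ cdf ν y) :
    invCDF ν t ≤ y := csInf_le (qSet_bddBelow ν ht0) h

lemma le_cdf_of_invCDF_le {ν : Measure ℝ} {t y : ℝ} (ht0 : 0 < t) (ht1 : t < 1)
    (h : invCDF ν t ≤ y) : t ≤ cdf ν y :=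
  (le_cdf_invCDF ν ht0 ht1).trans (monotone_cdf ν h)

/-! ### Shift vs quantiles -/

lemma invCDF_le_shift {ε : ℝ} {ν ν' : Measure ℝ} [IsProbabilityMeasure ν]
    [IsProbabilityMeasure ν'] (h : ShiftLE ε ν ν') {t : ℝ} (ht0 : 0 < t) (ht1 : t < 1) :
    invCDF ν t ≤ invCDF ν' t + ε := by
  have hne' := qSet_nonempty ν' ht1
  have hstep : ∀ y ∈ {y | t ≤ cdf ν' y}, invCDF ν t - ε ≤ y := by
    intro y hy
    have h1 : t ≤ cdf ν (y + ε) := le_trans hy (h.cdf_le y)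
    have h2 := invCDF_le_of_le_cdf ht0 h1
    linarith
  have := le_csInf hne' hstep
  have h3 : invCDF ν' t = sInf {y | t ≤ cdf ν' y} := rfl
  linarith [this]

lemma upInvCDF_le_shift {ε : ℝ} {ν ν' : Measure ℝ} [IsProbabilityMeasure ν]
    [IsProbabilityMeasure ν'] (h : ShiftLE ε ν ν') {t : ℝ} (ht0 : 0 < t) (ht1 : t < 1) :
    upInvCDF ν t ≤ upInvCDF ν' t + ε := by
  have hne' := qSet_nonempty' ν' ht1
  have hbd := qSet_bddBelow' ν ht0
  have hstep : ∀ y ∈ {y | t < cdf ν' y}, upInvCDF ν t - ε ≤ y := by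
    intro y hy
    have h1 : t < cdf ν (y + ε) := lt_of_lt_of_le hy (h.cdf_le y)
    have h2 : upInvCDF ν t ≤ y + ε := csInf_le hbd h1
    linarith
  have := le_csInf hne' hstep
  have h3 : upInvCDF ν' t = sInf {y | t < cdf ν' y} := rfl
  linarith [this]

lemma shiftLE_of_invCDF_le {ε : ℝ} {ν ν' : Measure ℝ} [IsProbabilityMeasure ν]
    [IsProbabilityMeasure ν'] (h : ∀ t, 0 < t → t < 1 → invCDF ν t ≤ invCDF ν' t + ε) :
    ShiftLE ε ν ν' := by
  refine shiftLE_of_cdf fun y => ?_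
  by_contra hlt
  push_neg at hlt
  have hd0 : 0 ≤ cdf ν (y + ε) := cdf_nonneg _ _
  have hc1 : cdf ν' y ≤ 1 := cdf_le_one _ _
  set t := (cdf ν (y + ε) + cdf ν' y) / 2 with ht_def
  have ht0 : 0 < t := by rw [ht_def]; linarith
  have htc : t < cdf ν' y := by rw [ht_def]; linarith
  have hdt : cdf ν (y + ε) < t := by rw [ht_def]; linarith
  have ht1 : t < 1 := lt_of_lt_of_le htc hc1
  have h1 : invCDF ν' t ≤ y := invCDF_le_of_le_cdf ht0 htc.le
  have h2 : invCDF ν t ≤ y + ε := (h t ht0 ht1).trans (by linarith)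
  have h3 : t ≤ cdf ν (y + ε) := le_cdf_of_invCDF_le ht0 ht1 h2
  linarith

/-! ### Shifts for `paramDistOne` -/

lemma shiftLE_paramDistOne {m : ℕ} {θ θ' : Fin m → ℝ} {ε : ℝ}
    (h : ∀ i, θ i ≤ θ' i + ε) : ShiftLE ε (paramDistOne θ) (paramDistOne θ') := by
  intro y
  rw [paramDistOne_apply _ measurableSet_Iic, paramDistOne_apply _ measurableSet_Iic]
  refine mul_le_mul' le_rfl (Finset.sum_le_sum fun i _ => ?_)
  by_cases hi : θ' i ∈ Iic y
  · have : θ i ∈ Iic (y + ε) := by simp only [mem_Iic] at hi ⊢; linarith [h i]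
    simp [Set.indicator_of_mem hi, Set.indicator_of_mem this]
  · simp [Set.indicator_of_notMem hi]

/-! ### Bounds on quantiles of `paramDistOne` -/

lemma invCDF_paramDistOne_mem {m : ℕ} (hm : 0 < m) (ζ : Fin m → ℝ) {t : ℝ}
    (ht : t ∈ Ioo (0:ℝ) 1) :
    invCDF (paramDistOne ζ) t ∈
      Icc (Finset.univ.inf' ⟨⟨0, hm⟩, Finset.mem_univ _⟩ ζ)
          (Finset.univ.sup' ⟨⟨0, hm⟩, Finset.mem_univ _⟩ ζ) := by
  haveI := isProb_paramDistOne hm ζ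
  set b := Finset.univ.inf' (⟨⟨0, hm⟩, Finset.mem_univ _⟩ : (Finset.univ : Finset (Fin m)).Nonempty) ζ with hb
  set M := Finset.univ.sup' (⟨⟨0, hm⟩, Finset.mem_univ _⟩ : (Finset.univ : Finset (Fin m)).Nonempty) ζ with hM
  constructor
  · refine le_csInf (qSet_nonempty _ ht.2) fun y hy => ?_
    by_contra hlt
    push_neg at hlt
    have hcdf : cdf (paramDistOne ζ) y = 0 := by
      rw [cdf_eq_real, measureReal_def, paramDistOne_apply _ measurableSet_Iic]
      have : ∀ i : Fin m, (Iic y).indicator (1 : ℝ → ℝ≥0∞) (ζ i) = 0 := by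
        intro i
        have : ζ i ∉ Iic y := by
          simp only [mem_Iic, not_le]
          exact lt_of_lt_of_le hlt (Finset.inf'_le _ (Finset.mem_univ i))
        simp [Set.indicator_of_notMem this]
      simp [this]
    have := hy
    simp only [mem_setOf_eq, hcdf] at this
    linarith [ht.1]
  · refine invCDF_le_of_le_cdf ht.1 ?_
    have hcdf : cdf (paramDistOne ζ) M = 1 := by
      rw [cdf_eq_real, measureReal_def]
      have : paramDistOne ζ (Iic M) = 1 := by
        rw [paramDistOne_apply _ measurableSet_Iic]
        have : ∀ i : Fin m, (Iic M).indicator (1 : ℝ → ℝ≥0∞) (ζ i) = 1 := by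
          intro i
          have : ζ i ∈ Iic M := mem_Iic.mpr (Finset.le_sup' _ (Finset.mem_univ i))
          simp [Set.indicator_of_mem this]
        simp only [this, Finset.sum_const, Finset.card_univ, Fintype.card_fin, nsmul_eq_mul,
          mul_one]
        exact ENNReal.inv_mul_cancel (by exact_mod_cast hm.ne') (by simp)
      rw [this]; simp
    rw [hcdf]; exact ht.2.le

lemma winf_paramDistOne_lt_top {m : ℕ} (hm : 0 < m) (ζ ζ' : Fin m → ℝ) :
    winf (paramDistOne ζ) (paramDistOne ζ') < ⊤ := by
  have hne : (Finset.univ : Finset (Fin m)).Nonempty := ⟨⟨0, hm⟩, Finset.mem_univ _⟩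
  set b := Finset.univ.inf' hne ζ with hb
  set M := Finset.univ.sup' hne ζ with hM
  set b' := Finset.univ.inf' hne ζ' with hb'
  set M' := Finset.univ.sup' hne ζ' with hM'
  have hle : winf (paramDistOne ζ) (paramDistOne ζ')
      ≤ ENNReal.ofReal (|M - b'| + |M' - b|) := by
    refine iSup_le ?_
    rintro ⟨t, ht⟩
    refine ENNReal.ofReal_le_ofReal ?_
    have h1 := invCDF_paramDistOne_mem hm ζ ht
    have h2 := invCDF_paramDistOne_mem hm ζ' ht
    rw [abs_le]
    have h1a := h1.1; have h1b := h1.2; have h2a := h2.1; have h2b := h2.2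
    constructor
    · nlinarith [le_abs_self (M - b'), le_abs_self (M' - b), abs_nonneg (M - b'),
        abs_nonneg (M' - b)]
    · nlinarith [le_abs_self (M - b'), le_abs_self (M' - b), abs_nonneg (M - b'),
        abs_nonneg (M' - b)]
  exact lt_of_le_of_lt hle ENNReal.ofReal_lt_top

lemma winf_le_of_shifts {ε : ℝ} (hε : 0 ≤ ε) {ν ν' : Measure ℝ} [IsProbabilityMeasure ν]
    [IsProbabilityMeasure ν'] (h : ShiftLE ε ν ν') (h' : ShiftLE ε ν' ν) :
    winf ν ν' ≤ ENNReal.ofReal ε := by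
  refine iSup_le ?_
  rintro ⟨t, ht⟩
  refine ENNReal.ofReal_le_ofReal ?_
  rw [abs_le]
  constructor
  · linarith [invCDF_le_shift h' ht.1 ht.2]
  · linarith [invCDF_le_shift h ht.1 ht.2]

end Aux

section Bellman

open Filter Topology

variable {X : Type*} [Fintype X] [MeasurableSpace X] [MeasurableSingletonClass X]

lemma measurable_kernel (γ : ℝ) {m : ℕ} (θ : X → Fin m → ℝ) :
    Measurable (fun p : ℝ × X => (paramDistOne (θ p.2)).map (fun z => p.1 + γ * z)) := by
  apply Measure.measurable_of_measurable_coe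
  intro s hs
  have hm : ∀ p : ℝ × X, ((paramDistOne (θ p.2)).map (fun z => p.1 + γ * z)) s
      = (m : ℝ≥0∞)⁻¹ * ∑ i : Fin m, s.indicator 1 (p.1 + γ * θ p.2 i) := fun p =>
    paramDistOne_map_apply _ (measurable_const.add (measurable_id'.const_mul γ)) hs
  simp only [hm]
  refine Measurable.const_mul (Finset.measurable_sum _ fun i _ => ?_) _
  exact (measurable_one.indicator hs).comp
    (measurable_fst.add (((measurable_of_countable (fun x => θ x i)).comp measurable_snd).const_mul γ))

lemma isProb_bellman (P : X → Measure (ℝ × X)) (hP : ∀ x, IsProbabilityMeasure (P x))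
    (γ : ℝ) {m : ℕ} (hm : 0 < m) (θ : X → Fin m → ℝ) (x : X) :
    IsProbabilityMeasure (bellman P γ (paramDist θ) x) := by
  haveI := hP x
  constructor
  show ((P x).bind fun p => (paramDistOne (θ p.2)).map (fun z => p.1 + γ * z)) univ = 1
  rw [Measure.bind_apply MeasurableSet.univ (measurable_kernel γ θ).aemeasurable]
  have h1 : ∀ p : ℝ × X, ((paramDistOne (θ p.2)).map (fun z => p.1 + γ * z)) univ = 1 := by
    intro p
    haveI := isProb_paramDistOne hm (θ p.2)
    rw [Measure.map_apply (f := fun z : ℝ => p.1 + γ * z)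
      (measurable_const.add (measurable_id'.const_mul γ)) MeasurableSet.univ]
    simp
  simp only [h1]
  simp

lemma shiftLE_bellman (P : X → Measure (ℝ × X)) {γ : ℝ} (hγ0 : 0 ≤ γ) {m : ℕ} (hm : 0 < m)
    {θ θ' : X → Fin m → ℝ} {ε : ℝ}
    (h : ∀ x, ShiftLE ε (paramDistOne (θ x)) (paramDistOne (θ' x))) (x : X) :
    ShiftLE (γ * ε) (bellman P γ (paramDist θ) x) (bellman P γ (paramDist θ') x) := by
  intro y
  show ((P x).bind fun p => (paramDistOne (θ' p.2)).map (fun z => p.1 + γ * z)) (Iic y)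
      ≤ ((P x).bind fun p => (paramDistOne (θ p.2)).map (fun z => p.1 + γ * z)) (Iic (y + γ * ε))
  rw [Measure.bind_apply measurableSet_Iic (measurable_kernel γ θ').aemeasurable,
      Measure.bind_apply measurableSet_Iic (measurable_kernel γ θ).aemeasurable]
  refine lintegral_mono fun p => ?_
  rcases eq_or_lt_of_le hγ0 with hγ | hγ
  · haveI := isProb_paramDistOne hm (θ p.2)
    haveI := isProb_paramDistOne hm (θ' p.2)
    have hfun : ∀ ζ : Fin m → ℝ, ∀ c : ℝ,
        (paramDistOne ζ).map (fun z => c + γ * z) = Measure.dirac c := by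
      intro ζ c
      have : (fun z : ℝ => c + γ * z) = fun _ => c := by
        funext z; rw [← hγ]; ring
      rw [this, Measure.map_const]
      haveI := isProb_paramDistOne hm ζ
      simp
    rw [hfun, hfun]
    have hy : Iic y ⊆ Iic (y + γ * ε) := Iic_subset_Iic.mpr (by rw [← hγ]; simp)
    exact measure_mono hy
  · have hmeas : Measurable (fun z : ℝ => p.1 + γ * z) :=
      measurable_const.add (measurable_id'.const_mul γ)
    rw [Measure.map_apply hmeas measurableSet_Iic, Measure.map_apply hmeas measurableSet_Iic]
    have hpre : ∀ u : ℝ, (fun z : ℝ => p.1 + γ * z) ⁻¹' Iic u = Iic ((u - p.1)/γ) := by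
      intro u
      ext z
      simp only [Set.mem_preimage, mem_Iic]
      rw [le_div_iff₀ hγ]
      constructor <;> intro hh <;> nlinarith
    rw [hpre, hpre]
    have heq : (y + γ * ε - p.1)/γ = (y - p.1)/γ + ε := by
      field_simp
      ring
    rw [heq]
    exact h p.2 _

end Bellman

section Core

open Filter Topology

variable {X : Type*} [Fintype X] [MeasurableSpace X] [MeasurableSingletonClass X]

lemma qlevel_mem {m : ℕ} (hm : 0 < m) (i : Fin m) : qlevel m i ∈ Ioo (0:ℝ) 1 := by
  have him : (i : ℝ) + 1 ≤ m := by exact_mod_cast i.isLt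
  have hi0 : (0:ℝ) ≤ (i : ℝ) := Nat.cast_nonneg _
  have hm0 : (0:ℝ) < m := by exact_mod_cast hm
  rw [qlevel]
  constructor
  · apply div_pos <;> linarith
  · rw [div_lt_one (by linarith)]
    linarith

/-- Key estimate: shifts on the inputs give a pointwise bound on the projected parameters. -/
lemma key_param_bound (P : X → Measure (ℝ × X)) (hP : ∀ x, IsProbabilityMeasure (P x))
    {γ : ℝ} (hγ0 : 0 ≤ γ) {m : ℕ} (hm : 0 < m) (lam : X → Fin m → ℝ)
    (hlam : lam ∈ unitCube X m) {θ θ' : X → Fin m → ℝ} {ε : ℝ}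
    (h1 : ∀ x, ShiftLE ε (paramDistOne (θ x)) (paramDistOne (θ' x)))
    (h2 : ∀ x, ShiftLE ε (paramDistOne (θ' x)) (paramDistOne (θ x))) :
    ∀ x i, |projBellmanParam P γ lam θ x i - projBellmanParam P γ lam θ' x i| ≤ γ * ε := by
  intro x i
  haveI := isProb_bellman P hP γ hm θ x
  haveI := isProb_bellman P hP γ hm θ' x
  have hs1 := shiftLE_bellman P hγ0 hm h1 x
  have hs2 := shiftLE_bellman P hγ0 hm h2 x
  obtain ⟨ht0, ht1⟩ := qlevel_mem hm i
  have ha1 := invCDF_le_shift hs1 ht0 ht1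
  have ha2 := invCDF_le_shift hs2 ht0 ht1
  have hb1 := upInvCDF_le_shift hs1 ht0 ht1
  have hb2 := upInvCDF_le_shift hs2 ht0 ht1
  obtain ⟨hl0, hl1⟩ := hlam x i
  show |((1 - lam x i) * invCDF (bellman P γ (paramDist θ) x) (qlevel m i)
        + lam x i * upInvCDF (bellman P γ (paramDist θ) x) (qlevel m i))
      - ((1 - lam x i) * invCDF (bellman P γ (paramDist θ') x) (qlevel m i)
        + lam x i * upInvCDF (bellman P γ (paramDist θ') x) (qlevel m i))| ≤ γ * ε
  rw [abs_le]
  constructor <;> nlinarith [mul_le_mul_of_nonneg_left ha1 (sub_nonneg.mpr hl1),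
    mul_le_mul_of_nonneg_left ha2 (sub_nonneg.mpr hl1),
    mul_le_mul_of_nonneg_left hb1 hl0, mul_le_mul_of_nonneg_left hb2 hl0]

/-- Pointwise parameter bounds give `w̄∞` bounds between the induced distributions. -/
lemma wbar_paramDist_le {m : ℕ} (hm : 0 < m) {θ θ' : X → Fin m → ℝ} {ε : ℝ} (hε : 0 ≤ ε)
    (h : ∀ x i, |θ x i - θ' x i| ≤ ε) :
    wbar (paramDist θ) (paramDist θ') ≤ ENNReal.ofReal ε := by
  refine iSup_le fun x => ?_
  haveI := isProb_paramDistOne hm (θ x)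
  haveI := isProb_paramDistOne hm (θ' x)
  show winf (paramDistOne (θ x)) (paramDistOne (θ' x)) ≤ ENNReal.ofReal ε
  refine winf_le_of_shifts hε ?_ ?_
  · exact shiftLE_paramDistOne fun i => by have := (abs_le.mp (h x i)).2; linarith
  · exact shiftLE_paramDistOne fun i => by have := (abs_le.mp (h x i)).1; linarith

lemma wbar_lt_top {m : ℕ} (hm : 0 < m) {η η' : X → Measure ℝ}
    (hη : ∀ x, η x ∈ FQ m) (hη' : ∀ x, η' x ∈ FQ m) : wbar η η' < ⊤ := by
  have hle : wbar η η' ≤ ∑ x : X, winf (η x) (η' x) := by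
    exact iSup_le fun x => Finset.single_le_sum (f := fun x => winf (η x) (η' x))
      (fun _ _ => zero_le) (Finset.mem_univ x)
  refine lt_of_le_of_lt hle (ENNReal.sum_lt_top.mpr fun x _ => ?_)
  obtain ⟨ζ, hζ⟩ := hη x
  obtain ⟨ζ', hζ'⟩ := hη' x
  rw [hζ, hζ']
  exact winf_paramDistOne_lt_top hm ζ ζ'

/-- The contraction estimate (statement 2 of the theorem). -/
lemma wbar_contract (P : X → Measure (ℝ × X)) (hP : ∀ x, IsProbabilityMeasure (P x))
    {γ : ℝ} (hγ0 : 0 ≤ γ) {m : ℕ} (hm : 0 < m) (lam : X → Fin m → ℝ)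
    (hlam : lam ∈ unitCube X m) (η η' : X → Measure ℝ)
    (hη : ∀ x, η x ∈ FQ m) (hη' : ∀ x, η' x ∈ FQ m) :
    wbar (proj lam (bellman P γ η)) (proj lam (bellman P γ η'))
      ≤ ENNReal.ofReal γ * wbar η η' := by
  have hθ : ∃ θ : X → Fin m → ℝ, η = paramDist θ := by
    refine ⟨fun x => (hη x).choose, funext fun x => (hη x).choose_spec⟩
  have hθ' : ∃ θ' : X → Fin m → ℝ, η' = paramDist θ' := by
    refine ⟨fun x => (hη' x).choose, funext fun x => (hη' x).choose_spec⟩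
  obtain ⟨θ, rfl⟩ := hθ
  obtain ⟨θ', rfl⟩ := hθ'
  set ε := (wbar (paramDist θ) (paramDist θ')).toReal with hε_def
  have hW : wbar (paramDist θ) (paramDist θ') ≠ ⊤ := (wbar_lt_top hm hη hη').ne
  have hε0 : 0 ≤ ε := ENNReal.toReal_nonneg
  have hpt : ∀ x t, 0 < t → t < 1 →
      |invCDF (paramDistOne (θ x)) t - invCDF (paramDistOne (θ' x)) t| ≤ ε := by
    intro x t ht0 ht1
    have h1 : ENNReal.ofReal |invCDF (paramDistOne (θ x)) t - invCDF (paramDistOne (θ' x)) t|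
        ≤ wbar (paramDist θ) (paramDist θ') := by
      refine le_trans ?_ (le_iSup _ x)
      exact le_iSup (fun s : Set.Ioo (0:ℝ) 1 =>
        ENNReal.ofReal |invCDF (paramDistOne (θ x)) s - invCDF (paramDistOne (θ' x)) s|)
        ⟨t, ht0, ht1⟩
    calc |invCDF (paramDistOne (θ x)) t - invCDF (paramDistOne (θ' x)) t|
        = (ENNReal.ofReal
            |invCDF (paramDistOne (θ x)) t - invCDF (paramDistOne (θ' x)) t|).toReal := by
          rw [ENNReal.toReal_ofReal (abs_nonneg _)]
      _ ≤ ε := ENNReal.toReal_mono hW h1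
  -- shifts with ε
  have hsh1 : ∀ x, ShiftLE ε (paramDistOne (θ x)) (paramDistOne (θ' x)) := by
    intro x
    haveI := isProb_paramDistOne hm (θ x)
    haveI := isProb_paramDistOne hm (θ' x)
    refine shiftLE_of_invCDF_le fun t ht0 ht1 => ?_
    have := (abs_le.mp (hpt x t ht0 ht1)).2
    linarith
  have hsh2 : ∀ x, ShiftLE ε (paramDistOne (θ' x)) (paramDistOne (θ x)) := by
    intro x
    haveI := isProb_paramDistOne hm (θ x)
    haveI := isProb_paramDistOne hm (θ' x)
    refine shiftLE_of_invCDF_le fun t ht0 ht1 => ?_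
    have := (abs_le.mp (hpt x t ht0 ht1)).1
    linarith
  have hkey := key_param_bound P hP hγ0 hm lam hlam hsh1 hsh2
  have hfinal : wbar (paramDist (projBellmanParam P γ lam θ))
      (paramDist (projBellmanParam P γ lam θ')) ≤ ENNReal.ofReal (γ * ε) :=
    wbar_paramDist_le hm (mul_nonneg hγ0 hε0) hkey
  have heq : ENNReal.ofReal (γ * ε) = ENNReal.ofReal γ * wbar (paramDist θ) (paramDist θ') := by
    rw [ENNReal.ofReal_mul hγ0, hε_def, ENNReal.ofReal_toReal hW]
  rw [heq] at hfinal
  exact hfinal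

end Core

section Main

open Filter Topology Function

lemma eq_of_invCDF_eq {ν ν' : Measure ℝ} [IsProbabilityMeasure ν] [IsProbabilityMeasure ν']
    (h : ∀ t, 0 < t → t < 1 → invCDF ν t = invCDF ν' t) : ν = ν' := by
  have h1 : ShiftLE 0 ν ν' := shiftLE_of_invCDF_le fun t ht0 ht1 => by rw [h t ht0 ht1]; simp
  have h2 : ShiftLE 0 ν' ν := shiftLE_of_invCDF_le fun t ht0 ht1 => by rw [h t ht0 ht1]; simp
  refine Measure.ext_of_Iic ν ν' fun a => ?_
  have e1 := h2 a
  have e2 := h1 a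
  rw [add_zero] at e1 e2
  exact le_antisymm e1 e2

lemma winf_self_eq_zero_imp {ν ν' : Measure ℝ} [IsProbabilityMeasure ν] [IsProbabilityMeasure ν']
    (h : winf ν ν' = 0) : ν = ν' := by
  refine eq_of_invCDF_eq fun t ht0 ht1 => ?_
  have h1 : ENNReal.ofReal |invCDF ν t - invCDF ν' t| ≤ winf ν ν' :=
    le_iSup (fun s : Set.Ioo (0:ℝ) 1 => ENNReal.ofReal |invCDF ν s - invCDF ν' s|) ⟨t, ht0, ht1⟩
  rw [h, le_zero_iff, ENNReal.ofReal_eq_zero] at h1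
  have := abs_nonneg (invCDF ν t - invCDF ν' t)
  have habs : |invCDF ν t - invCDF ν' t| = 0 := le_antisymm h1 this
  have := abs_eq_zero.mp habs
  linarith [sub_eq_zero.mp this]

/-- The projected distributional Bellman operator `Π^λ T^π` maps
`F_{Q,m}^X` into itself, is a `γ`-contraction in `w̄_∞` there, has a unique fixed point
`η̂^π_λ` in `F_{Q,m}^X`, and iterates converge to it at rate `γ^k`. -/
theorem projected_bellman_contraction_and_convergence
    {X : Type*} [Fintype X] [MeasurableSpace X] [MeasurableSingletonClass X]
    (P : X → Measure (ℝ × X)) (hP : ∀ x, IsProbabilityMeasure (P x))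
    (hPmean : ∀ x, Integrable (fun p : ℝ × X => p.1) (P x))
    (γ : ℝ) (hγ0 : 0 ≤ γ) (hγ1 : γ < 1)
    {m : ℕ} (hm : 0 < m) (lam : X → Fin m → ℝ) (hlam : lam ∈ unitCube X m) :
    (∀ η : X → Measure ℝ, (∀ x, η x ∈ FQ m) → ∀ x, proj lam (bellman P γ η) x ∈ FQ m)
    ∧ (∀ η η' : X → Measure ℝ, (∀ x, η x ∈ FQ m) → (∀ x, η' x ∈ FQ m) →
        wbar (proj lam (bellman P γ η)) (proj lam (bellman P γ η'))
          ≤ ENNReal.ofReal γ * wbar η η')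
    ∧ (∃! ηhat : X → Measure ℝ,
        (∀ x, ηhat x ∈ FQ m) ∧ proj lam (bellman P γ ηhat) = ηhat)
    ∧ (∀ ηhat : X → Measure ℝ,
        ((∀ x, ηhat x ∈ FQ m) ∧ proj lam (bellman P γ ηhat) = ηhat) →
        ∀ η0 : X → Measure ℝ, (∀ x, η0 x ∈ FQ m) →
          (∀ k : ℕ,
            wbar ((fun η => proj lam (bellman P γ η))^[k] η0) ηhat
              ≤ (ENNReal.ofReal γ) ^ k * wbar η0 ηhat)
          ∧ Filter.Tendsto
              (fun k => wbar ((fun η => proj lam (bellman P γ η))^[k] η0) ηhat)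
              Filter.atTop (nhds 0)) := by
  have hclosure : ∀ η : X → Measure ℝ, (∀ x, η x ∈ FQ m) →
      ∀ x, proj lam (bellman P γ η) x ∈ FQ m := fun η _ x =>
    ⟨projParam lam (bellman P γ η) x, rfl⟩
  have hcontract := fun η η' hη hη' =>
    wbar_contract P hP hγ0 hm lam hlam η η' hη hη'
  -- Fixed point via Banach on the parameter space
  have hK1 : Real.toNNReal γ < 1 := by
    rw [← Real.toNNReal_one]
    exact (Real.toNNReal_lt_toNNReal_iff_of_nonneg hγ0).mpr hγ1
  have hLip : LipschitzWith (Real.toNNReal γ) (projBellmanParam P γ lam) := by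
    refine LipschitzWith.of_dist_le_mul fun θ θ' => ?_
    have hd0 : (0:ℝ) ≤ dist θ θ' := dist_nonneg
    have hpt : ∀ x i, |θ x i - θ' x i| ≤ dist θ θ' := by
      intro x i
      calc |θ x i - θ' x i| = dist (θ x i) (θ' x i) := (Real.dist_eq _ _).symm
        _ ≤ dist (θ x) (θ' x) := dist_le_pi_dist _ _ i
        _ ≤ dist θ θ' := dist_le_pi_dist θ θ' x
    have hsh1 : ∀ x, ShiftLE (dist θ θ') (paramDistOne (θ x)) (paramDistOne (θ' x)) :=
      fun x => shiftLE_paramDistOne fun i => by have := (abs_le.mp (hpt x i)).2; linarith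
    have hsh2 : ∀ x, ShiftLE (dist θ θ') (paramDistOne (θ' x)) (paramDistOne (θ x)) :=
      fun x => shiftLE_paramDistOne fun i => by have := (abs_le.mp (hpt x i)).1; linarith
    have hkey := key_param_bound P hP hγ0 hm lam hlam hsh1 hsh2
    rw [Real.coe_toNNReal _ hγ0]
    refine dist_pi_le_iff (mul_nonneg hγ0 hd0) |>.mpr fun x => ?_
    refine dist_pi_le_iff (mul_nonneg hγ0 hd0) |>.mpr fun i => ?_
    rw [Real.dist_eq]
    exact hkey x i
  have hC : ContractingWith (Real.toNNReal γ) (projBellmanParam P γ lam) := ⟨hK1, hLip⟩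
  set θhat := hC.fixedPoint (projBellmanParam P γ lam) with hθhat_def
  have hfixθ : projBellmanParam P γ lam θhat = θhat := hC.fixedPoint_isFixedPt
  set ηhat := paramDist θhat with hηhat_def
  have hηhatFQ : ∀ x, ηhat x ∈ FQ m := fun x => ⟨θhat x, rfl⟩
  have hηhatfix : proj lam (bellman P γ ηhat) = ηhat := by
    show paramDist (projBellmanParam P γ lam θhat) = paramDist θhat
    rw [hfixθ]
  have huniq : ∀ η₁ η₂ : X → Measure ℝ,
      ((∀ x, η₁ x ∈ FQ m) ∧ proj lam (bellman P γ η₁) = η₁) →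
      ((∀ x, η₂ x ∈ FQ m) ∧ proj lam (bellman P γ η₂) = η₂) → η₁ = η₂ := by
    rintro η₁ η₂ ⟨hF1, hfix1⟩ ⟨hF2, hfix2⟩
    have hd := hcontract η₁ η₂ hF1 hF2
    rw [hfix1, hfix2] at hd
    have hdt : wbar η₁ η₂ ≠ ⊤ := (wbar_lt_top hm hF1 hF2).ne
    have hd0 : wbar η₁ η₂ = 0 := by
      by_contra h0
      have hlt : ENNReal.ofReal γ * wbar η₁ η₂ < 1 * wbar η₁ η₂ :=
        by
          rw [mul_comm _ (wbar η₁ η₂), mul_comm 1]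
          exact ENNReal.mul_lt_mul_right h0 hdt (ENNReal.ofReal_lt_one.mpr hγ1)
      rw [one_mul] at hlt
      exact absurd (lt_of_le_of_lt hd hlt) (lt_irrefl _)
    funext x
    have hx : winf (η₁ x) (η₂ x) = 0 := by
      have hle : winf (η₁ x) (η₂ x) ≤ wbar η₁ η₂ := le_iSup (fun x => winf (η₁ x) (η₂ x)) x
      rw [hd0] at hle
      exact le_antisymm hle zero_le
    obtain ⟨ζ, hζ⟩ := hF1 x
    obtain ⟨ζ', hζ'⟩ := hF2 x
    rw [hζ, hζ'] at hx ⊢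
    haveI := isProb_paramDistOne hm ζ
    haveI := isProb_paramDistOne hm ζ'
    exact winf_self_eq_zero_imp hx
  refine ⟨hclosure, hcontract, ⟨ηhat, ⟨hηhatFQ, hηhatfix⟩,
    fun η' h' => huniq η' ηhat h' ⟨hηhatFQ, hηhatfix⟩⟩, ?_⟩
  rintro ηh ⟨hhF, hhfix⟩ η0 hη0
  set F := fun η : X → Measure ℝ => proj lam (bellman P γ η) with hF_def
  have hiterFQ : ∀ k : ℕ, ∀ x, (F^[k] η0) x ∈ FQ m := by
    intro k
    induction k with
    | zero => simpa using hη0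
    | succ k ih =>
      rw [Function.iterate_succ_apply']
      exact hclosure _ ih
  have hbound : ∀ k : ℕ, wbar (F^[k] η0) ηh ≤ (ENNReal.ofReal γ)^k * wbar η0 ηh := by
    intro k
    induction k with
    | zero => simp
    | succ k ih =>
      rw [Function.iterate_succ_apply']
      calc wbar (F (F^[k] η0)) ηh = wbar (F (F^[k] η0)) (F ηh) := by
            rw [show F ηh = ηh from hhfix]
        _ ≤ ENNReal.ofReal γ * wbar (F^[k] η0) ηh := hcontract _ _ (hiterFQ k) hhF
        _ ≤ ENNReal.ofReal γ * ((ENNReal.ofReal γ)^k * wbar η0 ηh) := mul_le_mul' le_rfl ih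
        _ = (ENNReal.ofReal γ)^(k+1) * wbar η0 ηh := by ring
  refine ⟨hbound, ?_⟩
  have hC0 : wbar η0 ηh ≠ ⊤ := (wbar_lt_top hm hη0 hhF).ne
  have h1 : Tendsto (fun k : ℕ => (ENNReal.ofReal γ)^k * wbar η0 ηh) atTop (𝓝 0) := by
    have h2 := ENNReal.tendsto_pow_atTop_nhds_zero_of_lt_one (ENNReal.ofReal_lt_one.mpr hγ1)
    have h3 := ENNReal.Tendsto.mul_const h2 (Or.inr hC0)
    simpa using h3
  exact tendsto_of_tendsto_of_tendsto_of_le_of_le tendsto_const_nhds h1 (fun k => zero_le) hbound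

end Main
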